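/- arXiv:1002.0058 — 10 statements merged into one kernel-verified Lean document; each statement's English description precedes it below -/
import Mathlib

section
/- Let X be a real normed space and let x ∈ X with ‖x‖ = 1. Then every y ∈ X with ‖y‖ = 1 satisfies exactly one of the following three conditions: (i) ‖t•y + x‖ < ‖t•y − x‖ for all real t > 0; (ii) ‖t•y − x‖ < ‖t•y + x‖ for all real t > 0; (iii) there exists a real t > 0 with ‖t•y + x‖ = ‖t•y − x‖. -/
/-- Every unit vector `y` satisfies exactly one of:
(i) `‖t•y + x‖ < ‖t•y − x‖` for all `t > 0`;
(ii) `‖t•y − x‖ < ‖t•y + x‖` for all `t > 0`;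
(iii) `‖t•y + x‖ = ‖t•y − x‖` for some `t > 0`. -/
theorem bisector_trichotomy {X : Type*} [NormedAddCommGroup X] [NormedSpace ℝ X]
    (x : X) (hx : ‖x‖ = 1) (y : X) (hy : ‖y‖ = 1) :
    ((∀ t : ℝ, 0 < t → ‖t • y + x‖ < ‖t • y - x‖) ∧
      ¬ (∀ t : ℝ, 0 < t → ‖t • y - x‖ < ‖t • y + x‖) ∧
      ¬ (∃ t : ℝ, 0 < t ∧ ‖t • y + x‖ = ‖t • y - x‖)) ∨
    (¬ (∀ t : ℝ, 0 < t → ‖t • y + x‖ < ‖t • y - x‖) ∧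
      (∀ t : ℝ, 0 < t → ‖t • y - x‖ < ‖t • y + x‖) ∧
      ¬ (∃ t : ℝ, 0 < t ∧ ‖t • y + x‖ = ‖t • y - x‖)) ∨
    (¬ (∀ t : ℝ, 0 < t → ‖t • y + x‖ < ‖t • y - x‖) ∧
      ¬ (∀ t : ℝ, 0 < t → ‖t • y - x‖ < ‖t • y + x‖) ∧
      (∃ t : ℝ, 0 < t ∧ ‖t • y + x‖ = ‖t • y - x‖)) := by
  by_cases h3 : ∃ t : ℝ, 0 < t ∧ ‖t • y + x‖ = ‖t • y - x‖
  · refine Or.inr (Or.inr ⟨?_, ?_, h3⟩)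
    · intro h1
      obtain ⟨t, ht, he⟩ := h3
      exact absurd he (h1 t ht).ne
    · intro h2
      obtain ⟨t, ht, he⟩ := h3
      exact absurd he (h2 t ht).ne'
  · by_cases h1 : ∀ t : ℝ, 0 < t → ‖t • y + x‖ < ‖t • y - x‖
    · refine Or.inl ⟨h1, ?_, h3⟩
      intro h2
      exact absurd (h1 1 one_pos) (h2 1 one_pos).asymm
    · refine Or.inr (Or.inl ⟨h1, ?_, h3⟩)
      by_contra h2
      push_neg at h1 h2
      obtain ⟨t1, ht1, he1⟩ := h1
      obtain ⟨t2, ht2, he2⟩ := h2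
      set f : ℝ → ℝ := fun t => ‖t • y + x‖ - ‖t • y - x‖ with hf
      have hcont : Continuous f := by
        apply Continuous.sub <;> continuity
      have hIVT := intermediate_value_uIcc (a := t1) (b := t2) (f := f)
        hcont.continuousOn
      have h0 : (0 : ℝ) ∈ Set.uIcc (f t1) (f t2) := by
        refine Set.mem_uIcc.mpr (Or.inr ⟨?_, ?_⟩) <;> simp only [hf] <;> linarith
      obtain ⟨t, htmem, hft⟩ := hIVT h0
      have htpos : 0 < t := lt_of_lt_of_le (lt_min ht1 ht2) htmem.1
      exact h3 ⟨t, htpos, by simpa [hf, sub_eq_zero] using hft⟩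
end

section
/- Let X be a real normed space and let x, y ∈ X satisfy ‖y − x‖ < ‖y + x‖. Then for every real t with 0 ≤ t < 1, the point w := (1 − t)•y + t•x satisfies ‖w − x‖ < ‖w + x‖ (equivalently, (1 − t)•‖y − x‖ < ‖(1 − t)•y + (1 + t)•x‖). -/
/-- If `‖y − x‖ < ‖y + x‖`, then for all `0 ≤ t < 1` the point
`w := (1 − t)•y + t•x` satisfies `‖w − x‖ < ‖w + x‖`
(equivalently, `(1 − t)•‖y − x‖ < ‖(1 − t)•y + (1 + t)•x‖`). -/
theorem arc_stays_on_side {X : Type*} [NormedAddCommGroup X] [NormedSpace ℝ X]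
    (x y : X) (h : ‖y - x‖ < ‖y + x‖) (t : ℝ) (ht0 : 0 ≤ t) (ht1 : t < 1) :
    ‖((1 - t) • y + t • x) - x‖ < ‖((1 - t) • y + t • x) + x‖ ∧
      (1 - t) * ‖y - x‖ < ‖(1 - t) • y + (1 + t) • x‖ := by
  have hw1 : ((1 - t) • y + t • x) - x = (1 - t) • (y - x) := by module
  have hw2 : ((1 - t) • y + t • x) + x = (y + x) - t • (y - x) := by module
  have hw3 : (1 - t) • y + (1 + t) • x = (y + x) - t • (y - x) := by module
  have hnorm1 : ‖((1 - t) • y + t • x) - x‖ = (1 - t) * ‖y - x‖ := by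
    rw [hw1, norm_smul, Real.norm_eq_abs, abs_of_nonneg (by linarith : (0:ℝ) ≤ 1 - t)]
  have hnt : ‖t • (y - x)‖ = t * ‖y - x‖ := by
    rw [norm_smul, Real.norm_eq_abs, abs_of_nonneg ht0]
  have hlb : ‖y + x‖ - t * ‖y - x‖ ≤ ‖(y + x) - t • (y - x)‖ := by
    calc ‖y + x‖ - t * ‖y - x‖ = ‖y + x‖ - ‖t • (y - x)‖ := by rw [hnt]
      _ ≤ ‖(y + x) - t • (y - x)‖ := norm_sub_norm_le _ _
  have key : (1 - t) * ‖y - x‖ < ‖(y + x) - t • (y - x)‖ := by nlinarith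
  exact ⟨by rw [hnorm1, hw2]; exact key, by rw [hw3]; exact key⟩
end

section
/- Let X be a real normed space and let x ∈ X with ‖x‖ = 1. Then the set P(x)^r := {y ∈ X : ‖y‖ = 1 and ‖t•y − x‖ < ‖t•y + x‖ for all real t > 0} contains x and is path-connected in the subspace topology of the unit sphere S; by symmetry (reflection in the origin) the same holds for P(x)^l := {y ∈ X : ‖y‖ = 1 and ‖t•y + x‖ < ‖t•y − x‖ for all real t > 0}, which contains −x. -/
private lemma key_ineq {X : Type*} [NormedAddCommGroup X] [NormedSpace ℝ X]
    (v x : X) (h : ‖v - x‖ < ‖v + x‖) {b : ℝ} (hb : 0 ≤ b) :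
    ‖v + (b - 1) • x‖ < ‖v + (b + 1) • x‖ := by
  set A := ‖v - x‖
  set B := ‖v + x‖
  set C := ‖v + (b + 1) • x‖
  set D := ‖v + (b - 1) • x‖
  have h1 : (b + 2) • (v + x) = b • (v - x) + (2 : ℝ) • (v + (b + 1) • x) := by module
  have h2 : (b + 2) • (v + (b - 1) • x) = (2 : ℝ) • (v - x) + b • (v + (b + 1) • x) := by
    module
  have f1 : (b + 2) * B ≤ b * A + 2 * C := by
    have := norm_add_le (b • (v - x)) ((2 : ℝ) • (v + (b + 1) • x))
    rw [← h1, norm_smul, norm_smul, norm_smul, Real.norm_eq_abs, Real.norm_eq_abs,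
      Real.norm_eq_abs, abs_of_nonneg hb, abs_of_nonneg (by linarith : (0:ℝ) ≤ b + 2),
      abs_of_nonneg (by norm_num : (0:ℝ) ≤ 2)] at this
    linarith
  have f2 : (b + 2) * D ≤ 2 * A + b * C := by
    have := norm_add_le ((2 : ℝ) • (v - x)) (b • (v + (b + 1) • x))
    rw [← h2, norm_smul, norm_smul, norm_smul, Real.norm_eq_abs, Real.norm_eq_abs,
      Real.norm_eq_abs, abs_of_nonneg hb, abs_of_nonneg (by linarith : (0:ℝ) ≤ b + 2),
      abs_of_nonneg (by norm_num : (0:ℝ) ≤ 2)] at this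
    linarith
  nlinarith [h, f1, f2]

/-- The set `P(x)^r` of unit vectors `y` with `‖t•y − x‖ < ‖t•y + x‖`
for all `t > 0` contains `x` and is path-connected (in the subspace topology of the
unit sphere, equivalently as a subset of `X`); by symmetry the same holds for
`P(x)^l`, which contains `−x`. -/
theorem radial_sides_pathConnected {X : Type*} [NormedAddCommGroup X] [NormedSpace ℝ X]
    (x : X) (hx : ‖x‖ = 1) :
    x ∈ {y : X | ‖y‖ = 1 ∧ ∀ t : ℝ, 0 < t → ‖t • y - x‖ < ‖t • y + x‖} ∧
    IsPathConnected {y : X | ‖y‖ = 1 ∧ ∀ t : ℝ, 0 < t → ‖t • y - x‖ < ‖t • y + x‖} ∧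
    (-x) ∈ {y : X | ‖y‖ = 1 ∧ ∀ t : ℝ, 0 < t → ‖t • y + x‖ < ‖t • y - x‖} ∧
    IsPathConnected {y : X | ‖y‖ = 1 ∧ ∀ t : ℝ, 0 < t → ‖t • y + x‖ < ‖t • y - x‖} := by
  set P := {y : X | ‖y‖ = 1 ∧ ∀ t : ℝ, 0 < t → ‖t • y - x‖ < ‖t • y + x‖} with hP
  -- x ∈ P
  have hxP : x ∈ P := by
    refine ⟨hx, fun t ht => ?_⟩
    have : t • x - x = (t - 1) • x := by module
    rw [this]
    have : t • x + x = (t + 1) • x := by module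
    rw [this, norm_smul, norm_smul, hx, Real.norm_eq_abs, Real.norm_eq_abs,
      abs_of_nonneg (by linarith : (0:ℝ) ≤ t + 1)]
    rw [mul_one, mul_one]
    cases abs_cases (t - 1) with
    | inl h => linarith [h.1]
    | inr h => linarith [h.1]
  -- the key membership fact for points on the normalized segment
  have seg_ne : ∀ y ∈ P, ∀ s : ℝ, s ∈ Set.Icc (0:ℝ) 1 → (1 - s) • y + s • x ≠ 0 := by
    intro y hy s hs h0
    have hynx : y ≠ -x := by
      intro h
      have := hy.2 1 one_pos
      rw [h] at this
      rw [show (1:ℝ) • -x - x = -((2:ℝ) • x) by module,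
        show (1:ℝ) • -x + x = (0:X) by module] at this
      rw [norm_neg, norm_smul, hx, norm_zero] at this
      norm_num at this
    have h1 : (1 - s) • y = -(s • x) := by
      have := h0
      rw [add_eq_zero_iff_eq_neg] at this
      exact this
    have hn : (1 - s) = s := by
      have := congrArg norm h1
      rw [norm_neg, norm_smul, norm_smul, hy.1, hx, Real.norm_eq_abs, Real.norm_eq_abs,
        abs_of_nonneg (by linarith [hs.2] : (0:ℝ) ≤ 1 - s), abs_of_nonneg hs.1] at this
      simpa using this
    have hs2 : s = 1/2 := by linarith
    rw [hs2] at h1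
    norm_num at h1
    have : y = -x := by
      have := congrArg (fun z => (2:ℝ) • z) h1
      simpa [smul_smul] using this
    exact hynx this
  have seg_mem : ∀ y ∈ P, ∀ s : ℝ, s ∈ Set.Icc (0:ℝ) 1 →
      ‖(1 - s) • y + s • x‖⁻¹ • ((1 - s) • y + s • x) ∈ P := by
    intro y hy s hs
    set z := (1 - s) • y + s • x with hz
    have hz0 : z ≠ 0 := seg_ne y hy s hs
    have hzn : ‖z‖ ≠ 0 := norm_ne_zero_iff.mpr hz0
    have hznpos : 0 < ‖z‖ := norm_pos_iff.mpr hz0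
    constructor
    · rw [norm_smul, Real.norm_eq_abs, abs_of_nonneg (inv_nonneg.mpr (norm_nonneg z))]
      field_simp
    · intro t ht
      have hts : t • ‖z‖⁻¹ • z = (t * ‖z‖⁻¹ * (1 - s)) • y + (t * ‖z‖⁻¹ * s) • x := by
        rw [hz]; module
      set a := t * ‖z‖⁻¹ * (1 - s) with ha
      set b := t * ‖z‖⁻¹ * s with hb
      have hb0 : 0 ≤ b := by
        apply mul_nonneg (mul_nonneg (le_of_lt ht) (inv_nonneg.mpr (norm_nonneg z))) hs.1
      rw [hts]
      rcases eq_or_lt_of_le hs.2 with h1 | h1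
      · -- s = 1, so a = 0
        have ha0 : a = 0 := by rw [ha, ← h1]; ring
        rw [ha0, zero_smul, zero_add]
        have e1 : b • x - x = (b - 1) • x := by module
        have e2 : b • x + x = (b + 1) • x := by module
        rw [e1, e2, norm_smul, norm_smul, hx, Real.norm_eq_abs, Real.norm_eq_abs,
          abs_of_nonneg (by linarith : (0:ℝ) ≤ b + 1), mul_one, mul_one]
        have hbpos : 0 < b := by
          rw [hb, h1, mul_one]
          positivity
        cases abs_cases (b - 1) with
        | inl h => linarith [h.1]
        | inr h => linarith [h.1]
      · -- s < 1, so a > 0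
        have hapos : 0 < a := by
          apply mul_pos (mul_pos ht (inv_pos.mpr hznpos))
          linarith
        have hkey := key_ineq (a • y) x (hy.2 a hapos) hb0
        have e1 : a • y + b • x - x = a • y + (b - 1) • x := by module
        have e2 : a • y + b • x + x = a • y + (b + 1) • x := by module
        rw [e1, e2]
        exact hkey
  -- path-connectedness of P
  have hPpc : IsPathConnected P := by
    refine ⟨x, hxP, fun {y} hy => ?_⟩
    have hcont : Continuous fun s : unitInterval =>
        ‖(1 - (s:ℝ)) • y + (s:ℝ) • x‖⁻¹ • ((1 - (s:ℝ)) • y + (s:ℝ) • x) := by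
      have hg : Continuous fun s : unitInterval => (1 - (s:ℝ)) • y + (s:ℝ) • x := by
        fun_prop
      exact (hg.norm.inv₀ fun s => norm_ne_zero_iff.mpr
        (seg_ne y hy s (s.2))).smul hg
    have hjoin : JoinedIn P y x := by
      refine ⟨⟨⟨fun s => ‖(1 - (s:ℝ)) • y + (s:ℝ) • x‖⁻¹ • ((1 - (s:ℝ)) • y + (s:ℝ) • x),
          hcont⟩, ?_, ?_⟩, ?_⟩
      · simp [hy.1]
      · simp [hx]
      · intro s
        exact seg_mem y hy s s.2
    exact hjoin.symm
  -- symmetry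
  have himg : {y : X | ‖y‖ = 1 ∧ ∀ t : ℝ, 0 < t → ‖t • y + x‖ < ‖t • y - x‖} =
      (fun z : X => -z) '' P := by
    ext y
    constructor
    · intro hy
      refine ⟨-y, ⟨by simpa using hy.1, fun t ht => ?_⟩, by simp⟩
      have := hy.2 t ht
      rw [show t • -y - x = -(t • y + x) by module, show t • -y + x = -(t • y - x) by module,
        norm_neg, norm_neg]
      exact this
    · rintro ⟨z, hz, rfl⟩
      refine ⟨by simpa using hz.1, fun t ht => ?_⟩
      have := hz.2 t ht
      rw [show t • -z + x = -(t • z - x) by module, show t • -z - x = -(t • z + x) by module,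
        norm_neg, norm_neg]
      exact this
  refine ⟨hxP, hPpc, ?_, ?_⟩
  · rw [himg]
    exact ⟨x, hxP, rfl⟩
  · rw [himg]
    exact hPpc.image continuous_neg
end

section
/- Let X be a finite-dimensional real normed space and let x ∈ X with ‖x‖ = 1. Write Q(x) for the closure, in the subspace topology of the unit sphere S, of the classical radial projection P(x) := {y ∈ S : ∃ t > 0, ‖t•y − x‖ = ‖t•y + x‖}. Set L := {y ∈ S : ∀ t > 0, ‖t•y + x‖ < ‖t•y − x‖} \ Q(x) and R := {y ∈ S : ∀ t > 0, ‖t•y − x‖ < ‖t•y + x‖} \ Q(x). Then S is the union of the pairwise disjoint sets Q(x), L, and R; Q(x) is compact; L ∪ R is open in S; and R = −L (R is the image of L under reflection in the origin). -/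
/-- The classical radial projection of the bisector `B(−x,x)`, as a subset of the
unit sphere (viewed as a subtype of `X`). -/
def radialProjSub {X : Type*} [NormedAddCommGroup X] [NormedSpace ℝ X] (x : X) :
    Set {z : X // ‖z‖ = 1} :=
  {y | ∃ t : ℝ, 0 < t ∧ ‖t • (y : X) - x‖ = ‖t • (y : X) + x‖}

/-- `Q(x)`: the closure of the radial projection in the subspace topology of the unit
sphere, regarded again as a subset of `X`. -/
def radialProjClosure {X : Type*} [NormedAddCommGroup X] [NormedSpace ℝ X] (x : X) :
    Set X :=
  Subtype.val '' closure (radialProjSub x)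

section Aux

variable {X : Type*} [NormedAddCommGroup X] [NormedSpace ℝ X]

lemma mem_radialProjClosure_iff (x : X) (y : X) (h : ‖y‖ = 1) :
    y ∈ radialProjClosure x ↔ (⟨y, h⟩ : {z : X // ‖z‖ = 1}) ∈ closure (radialProjSub x) := by
  constructor
  · rintro ⟨z, hz, rfl⟩
    convert hz using 2
  · intro h'
    exact ⟨_, h', rfl⟩

lemma neg_mem_radialProjClosure (x : X) {y : X} (hy : y ∈ radialProjClosure x) :
    -y ∈ radialProjClosure x := by
  obtain ⟨z, hz, rfl⟩ := hy
  set n : {z : X // ‖z‖ = 1} → {z : X // ‖z‖ = 1} :=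
    fun w => ⟨-(w : X), by simp [w.2]⟩ with hn
  have hcont : Continuous n := (continuous_subtype_val.neg).subtype_mk _
  have hmaps : Set.MapsTo n (radialProjSub x) (radialProjSub x) := by
    rintro w ⟨t, ht, heq⟩
    refine ⟨t, ht, ?_⟩
    have h1 : t • (-(w : X)) - x = -(t • (w : X) + x) := by
      rw [smul_neg]; abel
    have h2 : t • (-(w : X)) + x = -(t • (w : X) - x) := by
      rw [smul_neg]; abel
    rw [h1, h2, norm_neg, norm_neg, heq]
  have := hmaps.closure hcont hz
  exact ⟨n z, this, rfl⟩

/-- A continuous function on `(0,∞)` with no zeros has constant sign. -/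
lemma sign_const {g : ℝ → ℝ} (hg : Continuous g) (hne : ∀ t : ℝ, 0 < t → g t ≠ 0)
    {a b : ℝ} (ha : 0 < a) (hb : 0 < b) (hga : g a < 0) : g b < 0 := by
  by_contra hgb
  have hgb' : 0 < g b := lt_of_le_of_ne (not_lt.1 hgb) (Ne.symm (hne b hb))
  rcases le_total a b with hab | hba
  · have := intermediate_value_Icc hab hg.continuousOn
    have h0 : (0 : ℝ) ∈ Set.Icc (g a) (g b) := ⟨hga.le, hgb'.le⟩
    obtain ⟨s, hs, hgs⟩ := this h0
    exact hne s (lt_of_lt_of_le ha hs.1) hgs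
  · have := intermediate_value_Icc' hba hg.continuousOn
    have h0 : (0 : ℝ) ∈ Set.Icc (g a) (g b) := ⟨hga.le, hgb'.le⟩
    obtain ⟨s, hs, hgs⟩ := this h0
    exact hne s (lt_of_lt_of_le hb hs.1) hgs

lemma trichotomy (x : X) {y : X} (h : ‖y‖ = 1) (hQ : y ∉ radialProjClosure x) :
    (∀ t : ℝ, 0 < t → ‖t • y + x‖ < ‖t • y - x‖) ∨
    (∀ t : ℝ, 0 < t → ‖t • y - x‖ < ‖t • y + x‖) := by
  have hP : (⟨y, h⟩ : {z : X // ‖z‖ = 1}) ∉ radialProjSub x := by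
    intro hmem
    exact hQ ((mem_radialProjClosure_iff x y h).2 (subset_closure hmem))
  have hne : ∀ t : ℝ, 0 < t → ‖t • y - x‖ - ‖t • y + x‖ ≠ 0 := by
    intro t ht h0
    exact hP ⟨t, ht, by linarith [sub_eq_zero.1 h0]⟩
  have hg : Continuous fun t : ℝ => ‖t • y - x‖ - ‖t • y + x‖ := by fun_prop
  rcases lt_or_gt_of_ne (hne 1 one_pos) with h1 | h1
  · right
    intro t ht
    have := sign_const hg hne one_pos ht h1
    linarith
  · left
    intro t ht
    have key : ¬ (‖t • y - x‖ - ‖t • y + x‖ < 0) := by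
      intro hlt
      have := sign_const hg hne ht one_pos hlt
      linarith
    have := lt_of_le_of_ne (not_lt.1 key) (Ne.symm (hne t ht))
    linarith

end Aux

/-- With `Q(x)` the closure in the sphere `S` of the radial projection,
`L` and `R` the strict-side sets with `Q(x)` removed, the sphere is the union of the
pairwise disjoint sets `Q(x)`, `L`, `R`; `Q(x)` is compact; `L ∪ R` is open in `S`;
and `R` is the reflection of `L` in the origin. -/
theorem sphere_decomposition {X : Type*} [NormedAddCommGroup X] [NormedSpace ℝ X]
    [FiniteDimensional ℝ X] (x : X) (hx : ‖x‖ = 1)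
    (L R : Set X)
    (hL : L = {y : X | ‖y‖ = 1 ∧ ∀ t : ℝ, 0 < t → ‖t • y + x‖ < ‖t • y - x‖} \
      radialProjClosure x)
    (hR : R = {y : X | ‖y‖ = 1 ∧ ∀ t : ℝ, 0 < t → ‖t • y - x‖ < ‖t • y + x‖} \
      radialProjClosure x) :
    {z : X | ‖z‖ = 1} = radialProjClosure x ∪ L ∪ R ∧
    Disjoint (radialProjClosure x) L ∧ Disjoint (radialProjClosure x) R ∧
    Disjoint L R ∧
    IsCompact (radialProjClosure x) ∧
    IsOpen ((Subtype.val ⁻¹' (L ∪ R)) : Set {z : X // ‖z‖ = 1}) ∧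
    R = (fun y : X => -y) '' L := by
  subst hL hR
  have hQsub : radialProjClosure x ⊆ {z : X | ‖z‖ = 1} := by
    rintro _ ⟨z, -, rfl⟩; exact z.2
  refine ⟨?_, ?_, ?_, ?_, ?_, ?_, ?_⟩
  · ext y
    constructor
    · intro hy
      by_cases hQ : y ∈ radialProjClosure x
      · exact Or.inl (Or.inl hQ)
      · rcases trichotomy x hy hQ with hl | hr
        · exact Or.inl (Or.inr ⟨⟨hy, hl⟩, hQ⟩)
        · exact Or.inr ⟨⟨hy, hr⟩, hQ⟩
    · rintro ((h | ⟨⟨h, -⟩, -⟩) | ⟨⟨h, -⟩, -⟩)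
      · exact hQsub h
      · exact h
      · exact h
  · exact Set.disjoint_sdiff_right.mono_left le_rfl
  · exact Set.disjoint_sdiff_right.mono_left le_rfl
  · rw [Set.disjoint_left]
    rintro y ⟨⟨-, hl⟩, -⟩ ⟨⟨-, hr⟩, -⟩
    exact absurd (hr 1 one_pos) (not_lt.2 (hl 1 one_pos).le)
  · -- compactness
    have hclosedS : IsClosed {z : X | ‖z‖ = 1} :=
      isClosed_eq continuous_norm continuous_const
    have hemb := hclosedS.isClosedEmbedding_subtypeVal
    have hQclosed : IsClosed (radialProjClosure x) :=
      hemb.isClosedMap _ isClosed_closure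
    have hsub : radialProjClosure x ⊆ Metric.sphere (0 : X) 1 := by
      intro y hy
      rw [mem_sphere_zero_iff_norm]
      exact hQsub hy
    exact (isCompact_sphere (0 : X) 1).of_isClosed_subset hQclosed hsub
  · have heq : (Subtype.val ⁻¹' ({y : X | ‖y‖ = 1 ∧ ∀ t : ℝ, 0 < t → ‖t • y + x‖ < ‖t • y - x‖} \
      radialProjClosure x ∪ ({y : X | ‖y‖ = 1 ∧ ∀ t : ℝ, 0 < t → ‖t • y - x‖ < ‖t • y + x‖} \
      radialProjClosure x)) : Set {z : X // ‖z‖ = 1}) = (closure (radialProjSub x))ᶜ := by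
      ext z
      simp only [Set.mem_preimage, Set.mem_union, Set.mem_diff, Set.mem_compl_iff]
      constructor
      · rintro (⟨-, hQ⟩ | ⟨-, hQ⟩) hc <;>
          exact hQ ((mem_radialProjClosure_iff x z z.2).2 (by simpa using hc))
      · intro hc
        have hQ : (z : X) ∉ radialProjClosure x := by
          intro hmem
          exact hc (by simpa using (mem_radialProjClosure_iff x z z.2).1 hmem)
        rcases trichotomy x z.2 hQ with hl | hr
        · exact Or.inl ⟨⟨z.2, hl⟩, hQ⟩
        · exact Or.inr ⟨⟨z.2, hr⟩, hQ⟩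
    rw [heq]
    exact isClosed_closure.isOpen_compl
  · -- R = -L
    ext y
    simp only [Set.mem_image, Set.mem_diff, Set.mem_setOf_eq]
    constructor
    · rintro ⟨⟨hy, hr⟩, hQ⟩
      refine ⟨-y, ⟨⟨by simp [hy], ?_⟩, ?_⟩, by simp⟩
      · intro t ht
        have h1 : t • (-y) + x = -(t • y - x) := by rw [smul_neg]; abel
        have h2 : t • (-y) - x = -(t • y + x) := by rw [smul_neg]; abel
        rw [h1, h2, norm_neg, norm_neg]
        exact hr t ht
      · intro hmem
        have := neg_mem_radialProjClosure x hmem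
        rw [neg_neg] at this
        exact hQ this
    · rintro ⟨z, ⟨⟨hz, hl⟩, hQ⟩, rfl⟩
      refine ⟨⟨by simp [hz], ?_⟩, ?_⟩
      · intro t ht
        have h1 : t • (-z) - x = -(t • z + x) := by rw [smul_neg]; abel
        have h2 : t • (-z) + x = -(t • z - x) := by rw [smul_neg]; abel
        rw [h1, h2, norm_neg, norm_neg]
        exact hl t ht
      · intro hmem
        exact hQ (by simpa using neg_mem_radialProjClosure x hmem)
end

section
/- Let X be a real normed space, let x ∈ X with ‖x‖ = 1, and let z ∈ X satisfy ‖z − x‖ = ‖z + x‖. Put t := ‖z − x‖. Then t ≥ 1 and t ≥ ‖z‖; the points u := (1/t)•(z − x) and v := (1/t)•(z + x) lie on the unit sphere S; v − u = (2/t)•x is a positive multiple of x; and (1/t)•z = (u + v)/2. In particular ‖(1/t)•z‖ ≤ 1 and (1/t)•z is the midpoint of a chord of the unit ball parallel to x, i.e. (1/t)•z ∈ {(u + v)/2 : u, v ∈ S, v − u ∈ ℝ_{>0}•x}. -/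
/-- The set of midpoints of chords of the unit ball parallel to `x`. -/
def chordMidpoints {X : Type*} [NormedAddCommGroup X] [NormedSpace ℝ X] (x : X) :
    Set X :=
  {m | ∃ u v : X, ‖u‖ = 1 ∧ ‖v‖ = 1 ∧ (∃ l : ℝ, 0 < l ∧ v - u = l • x) ∧
    m = (1 / 2 : ℝ) • (u + v)}

/-- For a bisector point `z` (so `‖z − x‖ = ‖z + x‖`), with
`t := ‖z − x‖`, `u := (1/t)•(z − x)` and `v := (1/t)•(z + x)`: we have `t ≥ 1`,
`t ≥ ‖z‖`, `u` and `v` lie on the unit sphere, `v − u = (2/t)•x` is a positive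
multiple of `x`, `(1/t)•z` is the midpoint `(u + v)/2`, `‖(1/t)•z‖ ≤ 1`, and
`(1/t)•z` is a midpoint of a chord of the unit ball parallel to `x`. -/
theorem bisector_point_to_chord_midpoint {X : Type*} [NormedAddCommGroup X]
    [NormedSpace ℝ X] (x : X) (hx : ‖x‖ = 1) (z : X) (hz : ‖z - x‖ = ‖z + x‖)
    (t : ℝ) (ht : t = ‖z - x‖)
    (u v : X) (hu : u = (1 / t) • (z - x)) (hv : v = (1 / t) • (z + x)) :
    1 ≤ t ∧ ‖z‖ ≤ t ∧ ‖u‖ = 1 ∧ ‖v‖ = 1 ∧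
    v - u = (2 / t) • x ∧ 0 < 2 / t ∧
    (1 / t) • z = (1 / 2 : ℝ) • (u + v) ∧
    ‖(1 / t) • z‖ ≤ 1 ∧
    (1 / t) • z ∈ chordMidpoints x := by
  have h2 : (2:ℝ) ≤ 2 * t := by
    have : ‖(z + x) - (z - x)‖ ≤ ‖z + x‖ + ‖z - x‖ := norm_sub_le _ _
    have hxx : (z + x) - (z - x) = (2:ℝ) • x := by module
    rw [hxx, norm_smul] at this
    simp [hx] at this
    linarith [this, hz ▸ ht, ht]
  have ht1 : 1 ≤ t := by linarith
  have htpos : 0 < t := by linarith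
  have hzt : ‖z‖ ≤ t := by
    have : ‖(z - x) + (z + x)‖ ≤ ‖z - x‖ + ‖z + x‖ := norm_add_le _ _
    have hxx : (z - x) + (z + x) = (2:ℝ) • z := by module
    rw [hxx, norm_smul] at this
    simp at this
    linarith [this, hz ▸ ht, ht]
  have hnu : ‖u‖ = 1 := by
    rw [hu, norm_smul, ← ht, Real.norm_eq_abs, abs_of_pos (by positivity : (0:ℝ) < 1/t)]
    field_simp
  have hnv : ‖v‖ = 1 := by
    rw [hv, norm_smul, ← hz, ← ht, Real.norm_eq_abs, abs_of_pos (by positivity : (0:ℝ) < 1/t)]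
    field_simp
  have hvu : v - u = (2 / t) • x := by
    rw [hu, hv]; have := htpos.ne'
    match_scalars <;> field_simp <;> norm_num
  have hmid : (1 / t) • z = (1 / 2 : ℝ) • (u + v) := by
    rw [hu, hv]; have := htpos.ne'
    match_scalars <;> field_simp <;> norm_num
  refine ⟨ht1, hzt, hnu, hnv, hvu, by positivity, hmid, ?_, ?_⟩
  · rw [norm_smul, Real.norm_eq_abs, abs_of_pos (by positivity : (0:ℝ) < 1/t)]
    calc 1/t * ‖z‖ ≤ 1/t * t := by
          exact mul_le_mul_of_nonneg_left hzt (by positivity)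
      _ = 1 := by field_simp
  · exact ⟨u, v, hnu, hnv, ⟨2/t, by positivity, hvu⟩, hmid⟩
end

section
/- Let X be a real normed space, let x ∈ X with ‖x‖ = 1, let λ > 0 be real, and let u, v ∈ X satisfy ‖u‖ = ‖v‖ = 1 and v = u + λ•x. Then the point z := (1/λ)•(u + v) lies in the bisector B(−x,x), with ‖z − x‖ = ‖z + x‖ = 2/λ, and (1/‖z − x‖)•z = (u + v)/2. Hence every midpoint of a chord of the unit ball parallel to x is the image under the bounded-representation map Φ of a point of the bisector. -/
/-- If `u, v` are unit vectors with `v = u + λ•x` (`λ > 0`), then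
`z := (1/λ)•(u + v)` lies on the bisector `B(−x,x)` with
`‖z − x‖ = ‖z + x‖ = 2/λ`, and `(1/‖z − x‖)•z = (u + v)/2`. Hence every midpoint
of a chord of the unit ball parallel to `x` is the image under the
bounded-representation map `Φ` of a bisector point. -/
theorem chord_midpoint_is_Phi_image {X : Type*} [NormedAddCommGroup X]
    [NormedSpace ℝ X] (x : X) (hx : ‖x‖ = 1) (lam : ℝ) (hlam : 0 < lam)
    (u v : X) (hu : ‖u‖ = 1) (hv : ‖v‖ = 1) (huv : v = u + lam • x)
    (z : X) (hz : z = (1 / lam) • (u + v)) :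
    ‖z - x‖ = ‖z + x‖ ∧ ‖z - x‖ = 2 / lam ∧
    (1 / ‖z - x‖) • z = (1 / 2 : ℝ) • (u + v) := by
  have hl : lam ≠ 0 := ne_of_gt hlam
  have h1 : z - x = (2 / lam) • u := by
    rw [hz, huv]
    match_scalars <;> (field_simp; try ring)
  have h2 : z + x = (2 / lam) • v := by
    rw [hz, huv]
    match_scalars <;> (field_simp; try ring)
  have hn1 : ‖z - x‖ = 2 / lam := by
    rw [h1, norm_smul, hu, Real.norm_eq_abs, abs_of_pos (by positivity)]
    ring
  have hn2 : ‖z + x‖ = 2 / lam := by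
    rw [h2, norm_smul, hv, Real.norm_eq_abs, abs_of_pos (by positivity)]
    ring
  refine ⟨hn1.trans hn2.symm, hn1, ?_⟩
  rw [hn1, hz, smul_smul]
  congr 1
  field_simp
end

section
/- Let X be a finite-dimensional real normed space of dimension n ≥ 2 and let x ∈ X with ‖x‖ = 1. Then the shadow boundary SB(x) := {z ∈ S : ∀ t ∈ ℝ, ‖z + t•x‖ ≥ 1} equals the set of limit directions of the bisector at infinity: SB(x) = {y ∈ S : there exists a sequence (z_k) in X with ‖z_k − x‖ = ‖z_k + x‖ for all k, ‖z_k‖ → ∞, and (1/‖z_k‖)•z_k → y}. -/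
open Filter Topology

/-- If `z` is on the bisector of `±x`, then `‖z + s • x‖ ≥ ‖z‖ - ‖x‖` for all `s`. -/
lemma bisector_norm_lower {X : Type*} [NormedAddCommGroup X] [NormedSpace ℝ X]
    (z x : X) (hb : ‖z - x‖ = ‖z + x‖) (s : ℝ) :
    ‖z‖ - ‖x‖ ≤ ‖z + s • x‖ := by
  have hzx : ‖z‖ - ‖x‖ ≤ ‖z + x‖ := by
    have := norm_add_le (z + x) (-x)
    simp at this
    linarith
  have hzx' : ‖z‖ - ‖x‖ ≤ ‖z - x‖ := by
    have := norm_add_le (z - x) x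
    simp at this
    linarith
  rcases le_total 1 s with hs | hs
  · -- s ≥ 1
    have key : (s+1) • (z + x) = (s-1) • (z - x) + (2:ℝ) • (z + s • x) := by
      module
    have h1 : (s+1) * ‖z+x‖ ≤ (s-1) * ‖z-x‖ + 2 * ‖z + s • x‖ := by
      calc (s+1) * ‖z+x‖ = ‖(s+1) • (z+x)‖ := by
            rw [norm_smul, Real.norm_eq_abs, abs_of_nonneg (by linarith)]
        _ ≤ ‖(s-1) • (z-x)‖ + ‖(2:ℝ) • (z + s•x)‖ := by
            rw [key]; exact norm_add_le _ _
        _ = (s-1) * ‖z-x‖ + 2 * ‖z + s•x‖ := by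
            rw [norm_smul, norm_smul, Real.norm_eq_abs, Real.norm_eq_abs,
              abs_of_nonneg (by linarith : (0:ℝ) ≤ s-1), abs_of_nonneg (by norm_num : (0:ℝ) ≤ 2)]
    rw [hb] at h1
    linarith
  rcases le_total s (-1) with hs' | hs'
  · -- s ≤ -1
    have key : (1-s) • (z - x) = (-1-s) • (z + x) + (2:ℝ) • (z + s • x) := by
      module
    have h1 : (1-s) * ‖z-x‖ ≤ (-1-s) * ‖z+x‖ + 2 * ‖z + s • x‖ := by
      calc (1-s) * ‖z-x‖ = ‖(1-s) • (z-x)‖ := by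
            rw [norm_smul, Real.norm_eq_abs, abs_of_nonneg (by linarith)]
        _ ≤ ‖(-1-s) • (z+x)‖ + ‖(2:ℝ) • (z + s•x)‖ := by
            rw [key]; exact norm_add_le _ _
        _ = (-1-s) * ‖z+x‖ + 2 * ‖z + s•x‖ := by
            rw [norm_smul, norm_smul, Real.norm_eq_abs, Real.norm_eq_abs,
              abs_of_nonneg (by linarith : (0:ℝ) ≤ -1-s), abs_of_nonneg (by norm_num : (0:ℝ) ≤ 2)]
    rw [hb] at h1
    linarith
  · -- -1 ≤ s ≤ 1
    have h1 : ‖z‖ - ‖s • x‖ ≤ ‖z + s • x‖ := by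
      have := norm_add_le (z + s • x) (-(s • x))
      simp at this
      linarith
    have h2 : ‖s • x‖ ≤ ‖x‖ := by
      rw [norm_smul, Real.norm_eq_abs]
      nlinarith [abs_le.mpr ⟨hs', hs⟩, norm_nonneg x]
    linarith

/-- In a finite-dimensional real normed space of dimension `n ≥ 2`,
the shadow boundary `SB(x) = {z ∈ S : ∀ t, ‖z + t•x‖ ≥ 1}` equals the set of limit
directions of the bisector `B(−x,x)` at infinity. -/
theorem shadowBoundary_eq_limit_directions {X : Type*} [NormedAddCommGroup X]
    [NormedSpace ℝ X] [FiniteDimensional ℝ X] (hn : 2 ≤ Module.finrank ℝ X)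
    (x : X) (hx : ‖x‖ = 1) :
    {z : X | ‖z‖ = 1 ∧ ∀ t : ℝ, 1 ≤ ‖z + t • x‖} =
      {y : X | ‖y‖ = 1 ∧ ∃ z : ℕ → X,
        (∀ k, ‖z k - x‖ = ‖z k + x‖) ∧
        Tendsto (fun k => ‖z k‖) atTop atTop ∧
        Tendsto (fun k => (‖z k‖)⁻¹ • z k) atTop (𝓝 y)} := by
  ext y
  simp only [Set.mem_setOf_eq]
  constructor
  · rintro ⟨hy, hB⟩
    refine ⟨hy, ?_⟩
    -- For each k, find a bisector point (k+1) • y + s • x with |s| ≤ 1.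
    have key : ∀ n : ℕ, ∃ s : ℝ, |s| ≤ 1 ∧
        ‖(((n:ℝ)+1) • y + s • x) - x‖ = ‖(((n:ℝ)+1) • y + s • x) + x‖ := by
      intro n
      set k : ℝ := (n:ℝ) + 1 with hk
      have hkpos : 0 < k := by positivity
      have hBk : ∀ t : ℝ, k ≤ ‖k • y + t • x‖ := by
        intro t
        have h1 : k • y + t • x = k • (y + (t/k) • x) := by
          rw [smul_add, smul_smul, mul_div_cancel₀ _ hkpos.ne']
        rw [h1, norm_smul, Real.norm_eq_abs, abs_of_pos hkpos]
        nlinarith [hB (t/k)]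
      set g : ℝ → ℝ := fun s => ‖(k • y + s • x) - x‖ - ‖(k • y + s • x) + x‖ with hg
      have hcont : ContinuousOn g (Set.Icc (-1:ℝ) 1) := by
        apply Continuous.continuousOn
        fun_prop
      have hky : ‖k • y‖ = k := by
        rw [norm_smul, Real.norm_eq_abs, abs_of_pos hkpos, hy, mul_one]
      have hg1 : g 1 ≤ 0 := by
        have e1 : (k • y + (1:ℝ) • x) - x = k • y := by module
        have e2 : (k • y + (1:ℝ) • x) + x = k • y + (2:ℝ) • x := by module
        have := hBk 2
        simp only [hg, e1, e2, hky]
        linarith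
      have hgm1 : (0:ℝ) ≤ g (-1) := by
        have e1 : (k • y + (-1:ℝ) • x) - x = k • y + (-2:ℝ) • x := by module
        have e2 : (k • y + (-1:ℝ) • x) + x = k • y := by module
        have := hBk (-2)
        simp only [hg, e1, e2, hky]
        linarith
      have hmem : (0:ℝ) ∈ Set.Icc (g 1) (g (-1)) := ⟨hg1, hgm1⟩
      have := intermediate_value_Icc' (by norm_num : (-1:ℝ) ≤ 1) hcont hmem
      obtain ⟨s, hs, hgs⟩ := this
      refine ⟨s, abs_le.mpr ⟨hs.1, hs.2⟩, ?_⟩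
      have : ‖(k • y + s • x) - x‖ - ‖(k • y + s • x) + x‖ = 0 := hgs
      linarith
    choose s hs1 hs2 using key
    set z : ℕ → X := fun n => ((n:ℝ)+1) • y + (s n) • x with hz
    refine ⟨z, hs2, ?_, ?_⟩
    · -- norms tend to infinity
      have hlow : ∀ n : ℕ, (n:ℝ) + 1 ≤ ‖z n‖ := by
        intro n
        have hkpos : (0:ℝ) < (n:ℝ)+1 := by positivity
        have h1 : ((n:ℝ)+1) • y + (s n) • x = ((n:ℝ)+1) • (y + ((s n)/((n:ℝ)+1)) • x) := by
          rw [smul_add, smul_smul, mul_div_cancel₀ _ hkpos.ne']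
        rw [hz]
        simp only
        rw [h1, norm_smul, Real.norm_eq_abs, abs_of_pos hkpos]
        nlinarith [hB ((s n)/((n:ℝ)+1))]
      apply tendsto_atTop_mono hlow
      exact tendsto_atTop_add_const_right _ 1 tendsto_natCast_atTop_atTop
    · -- normalized sequence tends to y
      rw [tendsto_iff_norm_sub_tendsto_zero]
      have hbound : ∀ n : ℕ, ‖(‖z n‖)⁻¹ • z n - y‖ ≤ 2 / ((n:ℝ)+1) := by
        intro n
        set k : ℝ := (n:ℝ) + 1 with hk
        have hkpos : 0 < k := by positivity
        have hlow : k ≤ ‖z n‖ := by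
          have h1 : k • y + (s n) • x = k • (y + ((s n)/k) • x) := by
            rw [smul_add, smul_smul, mul_div_cancel₀ _ hkpos.ne']
          rw [hz]
          simp only
          rw [← hk, h1, norm_smul, Real.norm_eq_abs, abs_of_pos hkpos]
          nlinarith [hB ((s n)/k)]
        have hhigh : ‖z n‖ ≤ k + 1 := by
          rw [hz]
          simp only
          rw [← hk]
          calc ‖k • y + (s n) • x‖ ≤ ‖k • y‖ + ‖(s n) • x‖ := norm_add_le _ _
            _ = k * ‖y‖ + |s n| * ‖x‖ := by rw [norm_smul, norm_smul, Real.norm_eq_abs,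
                Real.norm_eq_abs, abs_of_pos hkpos]
            _ ≤ k + 1 := by rw [hy, hx]; nlinarith [hs1 n]
        have hnpos : (0:ℝ) < ‖z n‖ := lt_of_lt_of_le hkpos hlow
        have hu : z n = k • y + (s n) • x := by rw [hz]
        have hrw : (‖z n‖)⁻¹ • z n - y = (‖z n‖)⁻¹ • ((k - ‖z n‖) • y + (s n) • x) := by
          rw [hu]
          match_scalars
          · rw [hu] at hnpos
            field_simp
          · ring
        rw [hrw, norm_smul, Real.norm_eq_abs, abs_of_pos (inv_pos.mpr hnpos)]
        have h2 : ‖(k - ‖z n‖) • y + (s n) • x‖ ≤ 2 := by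
          calc ‖(k - ‖z n‖) • y + (s n) • x‖ ≤ ‖(k - ‖z n‖) • y‖ + ‖(s n) • x‖ :=
              norm_add_le _ _
            _ = |k - ‖z n‖| * ‖y‖ + |s n| * ‖x‖ := by
                rw [norm_smul, norm_smul, Real.norm_eq_abs, Real.norm_eq_abs]
            _ ≤ 2 := by
                rw [hy, hx]
                have : |k - ‖z n‖| ≤ 1 := abs_le.mpr ⟨by linarith, by linarith⟩
                nlinarith [hs1 n]
        have hinv : (‖z n‖)⁻¹ ≤ k⁻¹ := inv_anti₀ hkpos hlow
        calc (‖z n‖)⁻¹ * ‖(k - ‖z n‖) • y + (s n) • x‖ ≤ k⁻¹ * 2 := by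
              apply mul_le_mul hinv h2 (norm_nonneg _) (inv_pos.mpr hkpos).le
          _ = 2 / k := by ring
      apply squeeze_zero (fun n => norm_nonneg _) hbound
      have : Tendsto (fun n : ℕ => (n:ℝ)+1) atTop atTop :=
        tendsto_atTop_add_const_right _ 1 tendsto_natCast_atTop_atTop
      simpa using (tendsto_const_nhds.div_atTop this : Tendsto (fun n : ℕ => 2/((n:ℝ)+1)) atTop (𝓝 0))
  · rintro ⟨hy, z, hbz, hnorm, hlim⟩
    refine ⟨hy, ?_⟩
    intro t
    have h1 : Tendsto (fun k => ‖(‖z k‖)⁻¹ • z k + t • x‖) atTop (𝓝 ‖y + t • x‖) :=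
      ((hlim.add tendsto_const_nhds).norm)
    have h2 : Tendsto (fun k => 1 - (‖z k‖)⁻¹) atTop (𝓝 1) := by
      have : Tendsto (fun k => (‖z k‖)⁻¹) atTop (𝓝 0) :=
        tendsto_inv_atTop_zero.comp hnorm
      simpa using (tendsto_const_nhds.sub this : Tendsto (fun k => 1 - (‖z k‖)⁻¹) atTop (𝓝 (1-0)))
    refine le_of_tendsto_of_tendsto h2 h1 ?_
    have hev : ∀ᶠ k in atTop, (1:ℝ) ≤ ‖z k‖ := hnorm.eventually_ge_atTop 1
    filter_upwards [hev] with k hk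
    have hpos : (0:ℝ) < ‖z k‖ := lt_of_lt_of_le one_pos hk
    have hrw : (‖z k‖)⁻¹ • z k + t • x = (‖z k‖)⁻¹ • (z k + (t * ‖z k‖) • x) := by
      rw [smul_add, smul_smul]
      congr 2
      field_simp
    rw [hrw, norm_smul, Real.norm_eq_abs, abs_of_pos (inv_pos.mpr hpos)]
    have hlower : ‖z k‖ - 1 ≤ ‖z k + (t * ‖z k‖) • x‖ := by
      have := bisector_norm_lower (z k) x (hbz k) (t * ‖z k‖)
      rwa [hx] at this
    have := mul_le_mul_of_nonneg_left hlower (inv_pos.mpr hpos).le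
    calc (1:ℝ) - (‖z k‖)⁻¹ = (‖z k‖)⁻¹ * (‖z k‖ - 1) := by field_simp
      _ ≤ (‖z k‖)⁻¹ * ‖z k + (t * ‖z k‖) • x‖ := this
end

section
/- Let X be a finite-dimensional real normed space of dimension n ≥ 2 and let x ∈ X with ‖x‖ = 1. Then the shadow boundary SB(x) := {z ∈ S : ∀ t ∈ ℝ, ‖z + t•x‖ ≥ 1} is contained in the closure, taken in the subspace topology of the unit sphere S, of the classical radial projection P(x) := {y ∈ S : ∃ t > 0, ‖t•y − x‖ = ‖t •y + x‖}. -/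
/-- The shadow boundary `SB(x)` is contained in the closure, taken in
the subspace topology of the unit sphere, of the classical radial projection
`P(x)` (higher-dimensional extension of Theorem 2.6 of Martini–Wu). -/
theorem shadowBoundary_subset_radialProjClosure {X : Type*} [NormedAddCommGroup X]
    [NormedSpace ℝ X] [FiniteDimensional ℝ X] (hn : 2 ≤ Module.finrank ℝ X)
    (x : X) (hx : ‖x‖ = 1) :
    {z : X | ‖z‖ = 1 ∧ ∀ t : ℝ, 1 ≤ ‖z + t • x‖} ⊆
      Subtype.val '' closure (radialProjSub x) := by
  rintro z ⟨hz1, hz2⟩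
  refine ⟨⟨z, hz1⟩, ?_, rfl⟩
  rw [Metric.mem_closure_iff]
  intro ε hε
  set u : ℝ := ε / 4 with hu_def
  have hu : 0 < u := by positivity
  have hune : u ≠ 0 := ne_of_gt hu
  set G : ℝ → ℝ := fun s => ‖(1/u) • (z + s • x) - x‖ - ‖(1/u) • (z + s • x) + x‖ with hG
  have hGu : G u ≤ 0 := by
    have e1 : (1/u) • (z + u • x) - x = (1/u) • z := by
      match_scalars <;> field_simp <;> ring
    have e2 : (1/u) • (z + u • x) + x = (1/u) • (z + (2*u) • x) := by
      match_scalars <;> field_simp <;> ring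
    have h2 : 1 ≤ ‖z + (2*u) • x‖ := hz2 (2*u)
    have hpos : (0:ℝ) < 1/u := by positivity
    show ‖(1/u) • (z + u • x) - x‖ - ‖(1/u) • (z + u • x) + x‖ ≤ 0
    rw [e1, e2]
    simp only [norm_smul, Real.norm_eq_abs, abs_of_pos hpos, hz1, mul_one]
    nlinarith
  have hGnu : 0 ≤ G (-u) := by
    have e1 : (1/u) • (z + (-u) • x) - x = (1/u) • (z + (-(2*u)) • x) := by
      match_scalars <;> field_simp <;> ring
    have e2 : (1/u) • (z + (-u) • x) + x = (1/u) • z := by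
      match_scalars <;> field_simp <;> ring
    have h2 : 1 ≤ ‖z + (-(2*u)) • x‖ := hz2 (-(2*u))
    have hpos : (0:ℝ) < 1/u := by positivity
    show 0 ≤ ‖(1/u) • (z + (-u) • x) - x‖ - ‖(1/u) • (z + (-u) • x) + x‖
    rw [e1, e2]
    simp only [norm_smul, Real.norm_eq_abs, abs_of_pos hpos, hz1, mul_one]
    nlinarith
  have hGc : ContinuousOn G (Set.Icc (-u) u) := by
    apply Continuous.continuousOn
    fun_prop
  have hiv := intermediate_value_Icc' (by linarith : -u ≤ u) hGc
  obtain ⟨s, hs, hGs⟩ := hiv ⟨hGu, hGnu⟩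
  have hsz : 1 ≤ ‖z + s • x‖ := hz2 s
  have hszpos : 0 < ‖z + s • x‖ := lt_of_lt_of_le one_pos hsz
  set y : X := (‖z + s • x‖)⁻¹ • (z + s • x) with hy
  have hny : ‖y‖ = 1 := by
    rw [hy, norm_smul, norm_inv, norm_norm, inv_mul_cancel₀ (ne_of_gt hszpos)]
  refine ⟨⟨y, hny⟩, ⟨‖z + s • x‖ / u, by positivity, ?_⟩, ?_⟩
  · have hty : (‖z + s • x‖ / u) • y = (1/u) • (z + s • x) := by
      rw [hy, smul_smul]
      congr 1
      field_simp
    rw [hty]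
    have h0 : G s = 0 := hGs
    simp only [hG] at h0
    linarith
  · rw [Subtype.dist_eq, dist_eq_norm]
    show ‖z - y‖ < ε
    rw [norm_sub_rev]
    have hsu : |s| ≤ u := abs_le.mpr ⟨hs.1, hs.2⟩
    have hv : ‖z + s • x‖ ≤ 1 + |s| := by
      calc ‖z + s • x‖ ≤ ‖z‖ + ‖s • x‖ := norm_add_le _ _
        _ = 1 + |s| := by rw [hz1, norm_smul, hx, Real.norm_eq_abs, mul_one]
    have h1 : ‖y - (z + s • x)‖ = ‖z + s • x‖ - 1 := by
      have e : y - (z + s • x) = ((‖z + s • x‖)⁻¹ - 1) • (z + s • x) := by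
        rw [hy, sub_smul, one_smul]
      have hinv : (‖z + s • x‖)⁻¹ ≤ 1 := by
        rw [inv_le_one_iff₀]; right; exact hsz
      rw [e, norm_smul, Real.norm_eq_abs, abs_of_nonpos (by linarith)]
      field_simp
      ring
    have e2 : y - z = (y - (z + s • x)) + s • x := by abel
    have h3 : ‖y - z‖ ≤ ‖y - (z + s • x)‖ + ‖s • x‖ := by
      rw [e2]; exact norm_add_le _ _
    have h4 : ‖s • x‖ = |s| := by rw [norm_smul, hx, Real.norm_eq_abs, mul_one]
    have h5 : ‖y - z‖ ≤ 2 * u := by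
      rw [h1, h4] at h3; linarith
    have h6 : (2:ℝ) * u < ε := by rw [hu_def]; linarith
    linarith
end

section
/- Let X be a finite-dimensional real normed space and let x ∈ X with ‖x‖ = 1. Define S⁺ := {z ∈ S : ∃ ε > 0, ‖z − ε•x‖ < 1}, for z ∈ S⁺ set σ(z) := sup{s ≥ 0 : ‖z − s•x‖ ≤ 1}, and define φ(z) := z − (σ(z)/2)•x. Then φ is a homeomorphism of S⁺ onto the set C := {(u + v)/2 : u, v ∈ S, v − u ∈ ℝ_{>0}•x, ‖(u + v)/2‖ < 1} of midpoints of chords of the unit ball parallel to x that meet the interior of the unit ball. -/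
/-- `S⁺`: the set of upper endpoints (in direction `x`) of chords of the unit ball
meeting the open unit ball. -/
def upperSphere {X : Type*} [NormedAddCommGroup X] [NormedSpace ℝ X] (x : X) :
    Set X :=
  {z | ‖z‖ = 1 ∧ ∃ ε : ℝ, 0 < ε ∧ ‖z - ε • x‖ < 1}

/-- `σ(z) := sup {s ≥ 0 : ‖z − s•x‖ ≤ 1}`. -/
noncomputable def chordLength {X : Type*} [NormedAddCommGroup X] [NormedSpace ℝ X]
    (x z : X) : ℝ :=
  sSup {s : ℝ | 0 ≤ s ∧ ‖z - s • x‖ ≤ 1}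

namespace ChordAux

variable {X : Type*} [NormedAddCommGroup X] [NormedSpace ℝ X]

/-- Strict convexity-style estimate: a proper convex combination of a point of the closed
ball with a point of the open ball lies in the open ball. -/
lemma comb_lt {u v : X} (hu : ‖u‖ ≤ 1) (hv : ‖v‖ < 1) {θ : ℝ} (h0 : 0 < θ) (h1 : θ ≤ 1) :
    ‖θ • v + (1 - θ) • u‖ < 1 := by
  have h2 : (0:ℝ) ≤ 1 - θ := by linarith
  have h := norm_add_le (θ • v) ((1 - θ) • u)
  rw [norm_smul, norm_smul, Real.norm_of_nonneg h0.le, Real.norm_of_nonneg h2] at h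
  nlinarith [norm_nonneg u, norm_nonneg v]

/-- The forward exit time of the line `t ↦ p + t • x` from the closed unit ball. -/
noncomputable def T (x p : X) : ℝ := sSup {t : ℝ | ‖p + t • x‖ ≤ 1}

lemma K_closed (x p : X) : IsClosed {t : ℝ | ‖p + t • x‖ ≤ 1} := by
  have h : Continuous fun t : ℝ => ‖p + t • x‖ :=
    (continuous_const.add (continuous_id.smul continuous_const)).norm
  exact isClosed_le h continuous_const

lemma K_bdd {x : X} (hx : ‖x‖ = 1) (p : X) : BddAbove {t : ℝ | ‖p + t • x‖ ≤ 1} := by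
  refine ⟨1 + ‖p‖, fun t ht => ?_⟩
  have h1 : ‖t • x‖ ≤ ‖p + t • x‖ + ‖p‖ := by
    have h := norm_sub_le (p + t • x) p
    simpa using h
  rw [norm_smul, hx, mul_one, Real.norm_eq_abs] at h1
  have ht' : ‖p + t • x‖ ≤ 1 := ht
  have := le_abs_self t
  linarith

lemma K_zero {x p : X} (hp : ‖p‖ ≤ 1) : (0:ℝ) ∈ {t : ℝ | ‖p + t • x‖ ≤ 1} := by
  simpa using hp

lemma T_mem {x : X} (hx : ‖x‖ = 1) {p : X} (hp : ‖p‖ ≤ 1) : ‖p + T x p • x‖ ≤ 1 :=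
  (K_closed x p).csSup_mem ⟨0, K_zero hp⟩ (K_bdd hx p)

lemma T_pos {x : X} (hx : ‖x‖ = 1) {p : X} (hp : ‖p‖ < 1) : 0 < T x p := by
  set t₀ : ℝ := (1 - ‖p‖) / 2 with ht₀
  have ht₀0 : 0 < t₀ := by rw [ht₀]; linarith
  have hmem : t₀ ∈ {t : ℝ | ‖p + t • x‖ ≤ 1} := by
    have h := norm_add_le p (t₀ • x)
    rw [norm_smul, hx, mul_one, Real.norm_of_nonneg ht₀0.le] at h
    have : ‖p + t₀ • x‖ ≤ ‖p‖ + t₀ := h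
    simp only [Set.mem_setOf_eq]
    rw [ht₀] at this ⊢
    linarith
  exact lt_of_lt_of_le ht₀0 (le_csSup (K_bdd hx p) hmem)

/-- Auxiliary affine identity. -/
lemma comb_point (p x : X) {a b : ℝ} (hb : b ≠ 0) :
    p + a • x = (1 - a / b) • p + (a / b) • (p + b • x) := by
  rw [smul_add, smul_smul, div_mul_cancel₀ a hb]
  module

lemma T_interior {x : X} (hx : ‖x‖ = 1) {p : X} (hp : ‖p‖ < 1) {t : ℝ}
    (h0 : 0 < t) (ht : t < T x p) : ‖p + t • x‖ < 1 := by
  have hb0 : 0 < T x p := h0.trans ht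
  have hcomb := comb_point p x (a := t) hb0.ne'
  have hθ0 : 0 < 1 - t / T x p := by
    have : t / T x p < 1 := (div_lt_one hb0).2 ht
    linarith
  have hθ1 : 1 - t / T x p ≤ 1 := by
    have : 0 ≤ t / T x p := div_nonneg h0.le hb0.le
    linarith
  have h := comb_lt (u := p + T x p • x) (v := p) (T_mem hx hp.le) hp hθ0 hθ1
  have he : (1 - t / T x p) • p + (1 - (1 - t / T x p)) • (p + T x p • x)
      = p + t • x := by
    rw [show (1 - (1 - t / T x p)) = t / T x p by ring]
    exact (comb_point p x hb0.ne').symm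
  rwa [he] at h

lemma T_eq {x : X} (hx : ‖x‖ = 1) {p : X} (hp : ‖p‖ < 1) {a : ℝ}
    (ha : 0 < a) (hna : ‖p + a • x‖ = 1) : T x p = a := by
  have haK : a ∈ {t : ℝ | ‖p + t • x‖ ≤ 1} := le_of_eq hna
  have h1 : a ≤ T x p := le_csSup (K_bdd hx p) haK
  rcases h1.lt_or_eq with h | h
  · exfalso
    have := T_interior hx hp ha h
    rw [hna] at this
    exact lt_irrefl _ this
  · exact h.symm

lemma T_le {x : X} (hx : ‖x‖ = 1) {p : X} (hp : ‖p‖ < 1) {c : ℝ}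
    (hc : 0 < c) (hgc : 1 < ‖p + c • x‖) : T x p ≤ c := by
  by_contra h
  push_neg at h
  have := T_interior hx hp hc h
  linarith

lemma norm_line_est (x : X) (q q' : X) (c : ℝ) :
    ‖q + c • x‖ ≤ ‖q' + c • x‖ + ‖q - q'‖ := by
  have h := norm_add_le (q' + c • x) (q - q')
  have e : q' + c • x + (q - q') = q + c • x := by abel
  rwa [e] at h

lemma T_contOn {x : X} (hx : ‖x‖ = 1) :
    ContinuousOn (fun p : X => T x p) {p : X | ‖p‖ < 1} := by
  intro p₀ hp₀
  have hp₀' : ‖p₀‖ < 1 := hp₀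
  rw [Metric.continuousWithinAt_iff]
  intro ε hε
  set a := T x p₀ with ha
  have ha0 : 0 < a := T_pos hx hp₀'
  set ε' : ℝ := min ε a / 2 with hε'
  have hε'0 : 0 < ε' := by
    have := lt_min hε ha0
    rw [hε']; linarith
  have hε'a : ε' < a := by
    have := min_le_right ε a
    rw [hε']; linarith
  have hε'ε : ε' < ε := by
    have := min_le_left ε a
    rw [hε']; linarith
  have hlow : ‖p₀ + (a - ε') • x‖ < 1 := T_interior hx hp₀' (by linarith) (by linarith)
  have hhigh : 1 < ‖p₀ + (a + ε') • x‖ := by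
    by_contra h
    push_neg at h
    have : a + ε' ≤ a := le_csSup (K_bdd hx p₀) h
    linarith
  refine ⟨min (1 - ‖p₀ + (a - ε') • x‖) (‖p₀ + (a + ε') • x‖ - 1),
    lt_min (by linarith) (by linarith), ?_⟩
  intro p hp hdist
  have hp' : ‖p‖ < 1 := hp
  rw [dist_eq_norm] at hdist
  have hd1 : ‖p - p₀‖ < 1 - ‖p₀ + (a - ε') • x‖ :=
    lt_of_lt_of_le hdist (min_le_left _ _)
  have hd2 : ‖p - p₀‖ < ‖p₀ + (a + ε') • x‖ - 1 :=
    lt_of_lt_of_le hdist (min_le_right _ _)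
  have h1 : ‖p + (a - ε') • x‖ ≤ 1 := by
    have := norm_line_est x p p₀ (a - ε')
    linarith
  have hTp_lb : a - ε' ≤ T x p := le_csSup (K_bdd hx p) h1
  have h2 : 1 < ‖p + (a + ε') • x‖ := by
    have h3 := norm_line_est x p₀ p (a + ε')
    have h4 : ‖p₀ - p‖ = ‖p - p₀‖ := norm_sub_rev _ _
    linarith
  have hTp_ub : T x p ≤ a + ε' := T_le hx hp' (by linarith) h2
  rw [Real.dist_eq]
  have habs : |T x p - a| ≤ ε' := abs_le.2 ⟨by linarith, by linarith⟩
  exact lt_of_le_of_lt habs hε'ε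

section Sigma

variable {x z : X} (hx : ‖x‖ = 1) (hz : ‖z‖ = 1) {ε : ℝ} (hε : 0 < ε)
  (hεz : ‖z - ε • x‖ < 1)

lemma A_closed : IsClosed {s : ℝ | 0 ≤ s ∧ ‖z - s • x‖ ≤ 1} := by
  have h1 : IsClosed {s : ℝ | 0 ≤ s} := isClosed_le continuous_const continuous_id
  have h2 : Continuous fun s : ℝ => ‖z - s • x‖ :=
    (continuous_const.sub (continuous_id.smul continuous_const)).norm
  exact h1.inter (isClosed_le h2 continuous_const)

include hx hz in
lemma A_bdd : BddAbove {s : ℝ | 0 ≤ s ∧ ‖z - s • x‖ ≤ 1} := by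
  refine ⟨2, fun s hs => ?_⟩
  obtain ⟨hs0, hs1⟩ := hs
  have h1 : ‖s • x‖ ≤ ‖z‖ + ‖z - s • x‖ := by
    have h := norm_sub_le z (z - s • x)
    simpa using h
  rw [norm_smul, hx, mul_one, Real.norm_of_nonneg hs0, hz] at h1
  linarith

include hx hz in
lemma sigma_mem : 0 ≤ chordLength x z ∧ ‖z - chordLength x z • x‖ ≤ 1 :=
  A_closed.csSup_mem ⟨0, by simp [hz]⟩ (A_bdd hx hz)

include hx hz hε hεz in
lemma eps_le_sigma : ε ≤ chordLength x z :=
  le_csSup (A_bdd hx hz) ⟨hε.le, hεz.le⟩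

include hx hz in
lemma sigma_norm' (hεz' : ‖z - chordLength x z • x‖ < 1) : False := by
  set σ := chordLength x z with hσ
  set δ : ℝ := 1 - ‖z - σ • x‖ with hδ
  have hδ0 : 0 < δ := by rw [hδ]; linarith
  have hσ0 : 0 ≤ σ := (sigma_mem hx hz).1
  have hmem : σ + δ ∈ {s : ℝ | 0 ≤ s ∧ ‖z - s • x‖ ≤ 1} := by
    refine ⟨by linarith, ?_⟩
    have he : z - (σ + δ) • x = (z - σ • x) + (-δ) • x := by module
    have h := norm_add_le (z - σ • x) ((-δ) • x)
    rw [norm_smul, hx, mul_one, Real.norm_eq_abs, abs_neg, abs_of_pos hδ0] at h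
    rw [he]
    rw [hδ] at h ⊢
    linarith
  have : σ + δ ≤ σ := le_csSup (A_bdd hx hz) hmem
  linarith

include hx hz in
lemma sigma_norm : ‖z - chordLength x z • x‖ = 1 := by
  rcases lt_or_eq_of_le (sigma_mem hx hz).2 with h | h
  · exact absurd h (fun h => sigma_norm' hx hz h)
  · exact h

include hx hz hε hεz in
lemma eps_lt_sigma : ε < chordLength x z := by
  rcases lt_or_eq_of_le (eps_le_sigma hx hz hε hεz) with h | h
  · exact h
  · exfalso
    rw [h, sigma_norm hx hz] at hεz
    exact lt_irrefl _ hεz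

include hx hz hε hεz in
lemma sigma_interior {t : ℝ} (h0 : 0 < t) (ht : t < chordLength x z) :
    ‖z - t • x‖ < 1 := by
  set σ := chordLength x z with hσ
  have hεσ : ε < σ := eps_lt_sigma hx hz hε hεz
  rcases le_or_gt t ε with hcase | hcase
  · -- t between 0 and ε
    have he : z - t • x = (t / ε) • (z - ε • x) + (1 - t / ε) • z := by
      rw [smul_sub, smul_smul, div_mul_cancel₀ t hε.ne']
      module
    rw [he]
    exact comb_lt hz.le hεz (div_pos h0 hε) ((div_le_one hε).2 hcase)
  · -- t between ε and σ
    set θ : ℝ := (σ - t) / (σ - ε) with hθ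
    have hden : (0:ℝ) < σ - ε := by linarith
    have hθ0 : 0 < θ := div_pos (by linarith) hden
    have hθ1 : θ ≤ 1 := by
      rw [hθ, div_le_one hden]; linarith
    have hcoef : θ * ε + (1 - θ) * σ = t := by
      rw [hθ]; field_simp; ring
    have he : z - t • x = θ • (z - ε • x) + (1 - θ) • (z - σ • x) := by
      rw [← hcoef]; module
    rw [he]
    exact comb_lt (sigma_mem hx hz).2 hεz hθ0 hθ1

include hx hz hε hεz in
lemma sigma_eq {b : ℝ} (hb : 0 < b) (hnb : ‖z - b • x‖ = 1) : chordLength x z = b := by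
  have hbA : b ≤ chordLength x z := le_csSup (A_bdd hx hz) ⟨hb.le, hnb.le⟩
  rcases lt_or_eq_of_le hbA with h | h
  · exfalso
    have := sigma_interior hx hz hε hεz hb h
    rw [hnb] at this
    exact lt_irrefl _ this
  · exact h.symm

include hx hz hε hεz in
lemma sigma_eq_T : chordLength x z = ε + T (-x) (z - ε • x) := by
  have hxn : ‖-x‖ = 1 := by rw [norm_neg, hx]
  have hεσ : ε < chordLength x z := eps_lt_sigma hx hz hε hεz
  have h2 : (z - ε • x) + (chordLength x z - ε) • (-x) = z - chordLength x z • x := by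
    module
  have := T_eq hxn hεz (a := chordLength x z - ε) (by linarith)
    (by rw [h2]; exact sigma_norm hx hz)
  linarith

end Sigma

lemma phi_mem {x : X} (hx : ‖x‖ = 1) {z : X} (hz : z ∈ upperSphere x) :
    (z - (chordLength x z / 2) • x) ∈ chordMidpoints x ∧
      ‖z - (chordLength x z / 2) • x‖ < 1 := by
  obtain ⟨hzn, ε, hε, hεz⟩ := hz
  have hσpos : 0 < chordLength x z := lt_of_lt_of_le hε (eps_le_sigma hx hzn hε hεz)
  have hhalf : ‖z - (chordLength x z / 2) • x‖ < 1 :=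
    sigma_interior hx hzn hε hεz (by linarith) (by linarith)
  refine ⟨⟨z - chordLength x z • x, z, sigma_norm hx hzn, hzn,
    ⟨chordLength x z, hσpos, by module⟩, by module⟩, hhalf⟩

lemma psi_spec {x : X} (hx : ‖x‖ = 1) {m : X} (hm : m ∈ chordMidpoints x)
    (hmlt : ‖m‖ < 1) :
    0 < T x m ∧ ‖m + T x m • x‖ = 1 ∧ (m + T x m • x) ∈ upperSphere x ∧
      chordLength x (m + T x m • x) = 2 * T x m := by
  obtain ⟨u, v, hu, hv, ⟨l, hl, hvu⟩, hmeq⟩ := hm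
  have h1 : (l / 2) • x = (1 / 2 : ℝ) • (v - u) := by
    rw [hvu, smul_smul]; congr 1; ring
  have hveq : m + (l / 2) • x = v := by rw [hmeq, h1]; module
  have hueq : m - (l / 2) • x = u := by rw [hmeq, h1]; module
  have hT : T x m = l / 2 := T_eq hx hmlt (by linarith) (by rw [hveq]; exact hv)
  have hT0 : 0 < T x m := by rw [hT]; linarith
  have hnorm : ‖m + T x m • x‖ = 1 := by rw [hT, hveq]; exact hv
  have hvm : v - (l / 2) • x = m := by rw [← hveq]; abel
  have hvS : (m + T x m • x) ∈ upperSphere x := by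
    refine ⟨hnorm, l / 2, by linarith, ?_⟩
    rw [hT, hveq, hvm]
    exact hmlt
  have hvu' : v - l • x = u := by rw [← hveq, ← hueq]; module
  have hσv : chordLength x v = l :=
    sigma_eq hx hv (by linarith : (0:ℝ) < l / 2) (by rw [hvm]; exact hmlt) hl
      (by rw [hvu']; exact hu)
  refine ⟨hT0, hnorm, hvS, ?_⟩
  rw [hT, hveq, hσv]; ring

lemma sigma_contOn {x : X} (hx : ‖x‖ = 1) :
    ContinuousOn (chordLength x) (upperSphere x) := by
  intro z₀ hz₀
  obtain ⟨hz₀n, ε, hε, hεz₀⟩ := hz₀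
  have hxn : ‖-x‖ = 1 := by rw [norm_neg, hx]
  set U : Set X := {z | ‖z - ε • x‖ < 1} with hU
  have hUopen : IsOpen U := by
    have h : Continuous fun z : X => ‖z - ε • x‖ :=
      (continuous_id.sub continuous_const).norm
    exact isOpen_lt h continuous_const
  have hz₀U : z₀ ∈ U := hεz₀
  have hUnz : U ∈ nhds z₀ := hUopen.mem_nhds hz₀U
  rw [← continuousWithinAt_inter hUnz]
  have hz₀mem : z₀ ∈ upperSphere x ∩ U := ⟨⟨hz₀n, ε, hε, hεz₀⟩, hz₀U⟩
  have hcongr : ∀ z ∈ upperSphere x ∩ U,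
      chordLength x z = ε + T (-x) (z - ε • x) := by
    intro z hzmem
    exact sigma_eq_T hx hzmem.1.1 hε hzmem.2
  have hc : ContinuousWithinAt (fun z => ε + T (-x) (z - ε • x))
      (upperSphere x ∩ U) z₀ := by
    have h1 : ContinuousOn (fun z : X => T (-x) (z - ε • x)) (upperSphere x ∩ U) := by
      apply (T_contOn hxn).comp ((continuous_id.sub continuous_const).continuousOn)
      intro z hzmem
      exact hzmem.2
    exact continuousWithinAt_const.add (h1.continuousWithinAt hz₀mem)
  exact hc.congr hcongr (hcongr z₀ hz₀mem)

end ChordAux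

open ChordAux in
/-- The map `φ(z) := z − (σ(z)/2)•x` is a homeomorphism of `S⁺` onto
the set `C` of midpoints of chords of the unit ball parallel to `x` meeting the
interior of the unit ball. -/
theorem upperSphere_homeo_chordMidpoints {X : Type*} [NormedAddCommGroup X]
    [NormedSpace ℝ X] [FiniteDimensional ℝ X] (x : X) (hx : ‖x‖ = 1) :
    ∃ e : upperSphere x ≃ₜ {m : X | m ∈ chordMidpoints x ∧ ‖m‖ < 1},
      ∀ z : upperSphere x, (e z : X) = (z : X) - (chordLength x (z : X) / 2) • x := by
  classical
  set C : Set X := {m : X | m ∈ chordMidpoints x ∧ ‖m‖ < 1} with hC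
  -- forward map
  let F : upperSphere x → C := fun z =>
    ⟨(z : X) - (chordLength x (z : X) / 2) • x, phi_mem hx z.2⟩
  -- inverse map
  let G : C → upperSphere x := fun m =>
    ⟨(m : X) + T x (m : X) • x, (psi_spec hx m.2.1 m.2.2).2.2.1⟩
  have hGF : Function.LeftInverse G F := by
    intro z
    obtain ⟨hzn, ε, hε, hεz⟩ := z.2
    set σ := chordLength x (z : X) with hσ
    have hσpos : 0 < σ := lt_of_lt_of_le hε (eps_le_sigma hx hzn hε hεz)
    have hmlt : ‖(z : X) - (σ / 2) • x‖ < 1 := (phi_mem hx z.2).2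
    have hback : ((z : X) - (σ / 2) • x) + (σ / 2) • x = (z : X) := by module
    have hT : T x ((z : X) - (σ / 2) • x) = σ / 2 :=
      T_eq hx hmlt (by linarith) (by rw [hback]; exact hzn)
    apply Subtype.ext
    show ((z : X) - (σ / 2) • x) + T x ((z : X) - (σ / 2) • x) • x = (z : X)
    rw [hT]
    exact hback
  have hFG : Function.RightInverse G F := by
    intro m
    have hspec := psi_spec hx m.2.1 m.2.2
    apply Subtype.ext
    show ((m : X) + T x (m : X) • x)
        - (chordLength x ((m : X) + T x (m : X) • x) / 2) • x = (m : X)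
    rw [hspec.2.2.2]
    module
  have hFcont : Continuous F := by
    apply Continuous.subtype_mk
    have hσ : Continuous fun z : upperSphere x => chordLength x (z : X) :=
      (sigma_contOn hx).restrict
    exact continuous_subtype_val.sub ((hσ.div_const 2).smul continuous_const)
  have hGcont : Continuous G := by
    apply Continuous.subtype_mk
    have hT : Continuous fun m : C => T x (m : X) :=
      ((T_contOn hx).mono (fun m hm => hm.2)).restrict
    exact continuous_subtype_val.add (hT.smul continuous_const)
  exact ⟨Homeomorph.mk ⟨F, G, hGF, hFG⟩ hFcont hGcont, fun z => rfl⟩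
end

section
/- Let X be a real normed space and let x ∈ X with ‖x‖ = 1. Then the bounded-representation map Φ(z) := (1/‖z − x‖)•z, restricted to the set {z ∈ B(−x,x) : ‖z‖ < ‖z − x‖} of bisector points whose image lies in the open unit ball, is a homeomorphism onto the set C := {(u + v)/2 : u, v ∈ S, v − u ∈ ℝ_{>0}•x, ‖(u + v)/2‖ < 1} of midpoints of chords of the unit ball parallel to x that meet the interior of the unit ball. -/
section Aux

variable {X : Type*} [NormedAddCommGroup X] [NormedSpace ℝ X]

/-- Key convexity lemma: moving from a point of norm `< 1` towards a point of
norm `≤ 1`, all intermediate points have norm `< 1`. -/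
lemma lemA {x m : X} (hm : ‖m‖ < 1) {r s : ℝ} (hr : 0 ≤ r) (hrs : r < s)
    (hs : ‖m + s • x‖ ≤ 1) : ‖m + r • x‖ < 1 := by
  have hs0 : 0 < s := lt_of_le_of_lt hr hrs
  have ha1 : r / s < 1 := (div_lt_one hs0).2 hrs
  have ha0 : 0 ≤ r / s := div_nonneg hr hs0.le
  have key : m + r • x = (1 - r / s) • m + (r / s) • (m + s • x) := by
    have hrs' : (r / s) * s = r := div_mul_cancel₀ r (ne_of_gt hs0)
    match_scalars
    · ring
    · field_simp
  rw [key]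
  have h0 : 0 ≤ ‖m‖ := norm_nonneg _
  calc ‖(1 - r / s) • m + (r / s) • (m + s • x)‖
      ≤ ‖(1 - r / s) • m‖ + ‖(r / s) • (m + s • x)‖ := norm_add_le _ _
    _ = (1 - r / s) * ‖m‖ + (r / s) * ‖m + s • x‖ := by
        rw [norm_smul, norm_smul, Real.norm_of_nonneg (by linarith),
          Real.norm_of_nonneg ha0]
    _ < 1 := by nlinarith [norm_nonneg (m + s • x)]

/-- Beyond the boundary crossing, the norm stays `≥ 1`. -/
lemma lemB {x m : X} (hm : ‖m‖ < 1) {r s : ℝ} (hs : 0 < s)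
    (h1 : ‖m + s • x‖ = 1) (hsr : s ≤ r) : 1 ≤ ‖m + r • x‖ := by
  rcases eq_or_lt_of_le hsr with h | h
  · rw [← h, h1]
  · by_contra hlt
    push_neg at hlt
    have := lemA hm hs.le h hlt.le
    rw [h1] at this
    exact lt_irrefl _ this

/-- Uniqueness of the half-chord-length. -/
lemma s_unique {x m : X} (hm : ‖m‖ < 1) {s₁ s₂ : ℝ} (h₁ : 0 < s₁) (h₂ : 0 < s₂)
    (e₁ : ‖m + s₁ • x‖ = 1) (e₂ : ‖m + s₂ • x‖ = 1) : s₁ = s₂ := by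
  rcases lt_trichotomy s₁ s₂ with h | h | h
  · have := lemA hm h₁.le h e₂.le
    rw [e₁] at this; exact absurd this (lt_irrefl _)
  · exact h
  · have := lemA hm h₂.le h e₁.le
    rw [e₂] at this; exact absurd this (lt_irrefl _)

lemma exists_s (x : X) {m : X} (hm : m ∈ chordMidpoints x) :
    ∃ s : ℝ, 0 < s ∧ ‖m - s • x‖ = 1 ∧ ‖m + s • x‖ = 1 := by
  obtain ⟨u, v, hu, hv, ⟨l, hl, hvu⟩, rfl⟩ := hm
  have hv' : v = u + l • x := by rw [← hvu]; abel
  refine ⟨l / 2, by linarith, ?_, ?_⟩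
  · have : (1 / 2 : ℝ) • (u + v) - (l / 2) • x = u := by
      rw [hv']; match_scalars <;> ring
    rw [this, hu]
  · have : (1 / 2 : ℝ) • (u + v) + (l / 2) • x = v := by
      rw [hv']; match_scalars <;> ring
    rw [this, hv]

noncomputable def sFun (x : X) (m : {m : X | m ∈ chordMidpoints x ∧ ‖m‖ < 1}) : ℝ :=
  (exists_s x m.2.1).choose

lemma sFun_pos (x : X) (m : {m : X | m ∈ chordMidpoints x ∧ ‖m‖ < 1}) :
    0 < sFun x m := (exists_s x m.2.1).choose_spec.1

lemma sFun_sub (x : X) (m : {m : X | m ∈ chordMidpoints x ∧ ‖m‖ < 1}) :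
    ‖(m : X) - sFun x m • x‖ = 1 := (exists_s x m.2.1).choose_spec.2.1

lemma sFun_add (x : X) (m : {m : X | m ∈ chordMidpoints x ∧ ‖m‖ < 1}) :
    ‖(m : X) + sFun x m • x‖ = 1 := (exists_s x m.2.1).choose_spec.2.2

lemma sFun_eq (x : X) (m : {m : X | m ∈ chordMidpoints x ∧ ‖m‖ < 1}) {s : ℝ}
    (hs : 0 < s) (h2 : ‖(m : X) + s • x‖ = 1) : sFun x m = s :=
  s_unique m.2.2 (sFun_pos x m) hs (sFun_add x m) h2

lemma continuous_sFun (x : X) : Continuous (sFun x) := by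
  rw [continuous_iff_continuousAt]
  intro m₀
  rw [ContinuousAt, Metric.tendsto_nhds]
  intro ε hε
  set s₀ := sFun x m₀ with hs₀def
  have hs₀ : 0 < s₀ := sFun_pos x m₀
  set ε' := min ε s₀ with hε'def
  have hε'0 : 0 < ε' := lt_min hε hs₀
  have hε's : ε' ≤ s₀ := min_le_right _ _
  have hε'ε : ε' ≤ ε := min_le_left _ _
  have h₁ : ‖(m₀ : X) + (s₀ - ε') • x‖ < 1 := by
    rcases eq_or_lt_of_le hε's with h | h
    · simpa [← h] using m₀.2.2
    · exact lemA m₀.2.2 (by linarith) (by linarith) (sFun_add x m₀).le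
  have h₂ : 1 < ‖(m₀ : X) + (s₀ + ε') • x‖ := by
    by_contra h
    push_neg at h
    have := lemA m₀.2.2 hs₀.le (by linarith) h
    rw [sFun_add x m₀] at this
    exact lt_irrefl _ this
  have hc₁ : Continuous fun m : {m : X | m ∈ chordMidpoints x ∧ ‖m‖ < 1} =>
      ‖(m : X) + (s₀ - ε') • x‖ :=
    (continuous_subtype_val.add continuous_const).norm
  have hc₂ : Continuous fun m : {m : X | m ∈ chordMidpoints x ∧ ‖m‖ < 1} =>
      ‖(m : X) + (s₀ + ε') • x‖ :=
    (continuous_subtype_val.add continuous_const).norm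
  have ev₁ : ∀ᶠ m : {m : X | m ∈ chordMidpoints x ∧ ‖m‖ < 1} in nhds m₀,
      ‖(m : X) + (s₀ - ε') • x‖ < 1 :=
    hc₁.continuousAt.eventually_lt continuousAt_const h₁
  have ev₂ : ∀ᶠ m : {m : X | m ∈ chordMidpoints x ∧ ‖m‖ < 1} in nhds m₀,
      1 < ‖(m : X) + (s₀ + ε') • x‖ :=
    continuousAt_const.eventually_lt hc₂.continuousAt h₂
  filter_upwards [ev₁, ev₂] with m hm1 hm2
  have hsm : 0 < sFun x m := sFun_pos x m
  have hgt : s₀ - ε' < sFun x m := by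
    by_contra h
    push_neg at h
    have := lemB m.2.2 hsm (sFun_add x m) h
    linarith
  have hlt : sFun x m < s₀ + ε' := by
    by_contra h
    push_neg at h
    rcases eq_or_lt_of_le h with h' | h'
    · rw [h', sFun_add x m] at hm2; exact lt_irrefl _ hm2
    · have := lemA m.2.2 (by linarith) h' (sFun_add x m).le
      linarith
  rw [Real.dist_eq, abs_lt]
  constructor <;> linarith

end Aux

/-- The bounded-representation map `Φ(z) := (1/‖z − x‖)•z`, restricted
to the set of bisector points whose image lies in the open unit ball, is a
homeomorphism onto the set `C` of midpoints of chords of the unit ball parallel to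
`x` meeting the interior of the unit ball. -/
theorem Phi_homeo_onto_interior_midpoints {X : Type*} [NormedAddCommGroup X]
    [NormedSpace ℝ X] (x : X) (hx : ‖x‖ = 1) :
    ∃ e : {z : X | ‖z - x‖ = ‖z + x‖ ∧ ‖z‖ < ‖z - x‖} ≃ₜ
      {m : X | m ∈ chordMidpoints x ∧ ‖m‖ < 1},
      ∀ z : {z : X | ‖z - x‖ = ‖z + x‖ ∧ ‖z‖ < ‖z - x‖},
        (e z : X) = (‖(z : X) - x‖)⁻¹ • (z : X) := by
  classical
  have htpos : ∀ z : {z : X | ‖z - x‖ = ‖z + x‖ ∧ ‖z‖ < ‖z - x‖},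
      0 < ‖(z : X) - x‖ := fun z => lt_of_le_of_lt (norm_nonneg _) z.2.2
  -- forward map lands in the target
  have hfwd : ∀ z : {z : X | ‖z - x‖ = ‖z + x‖ ∧ ‖z‖ < ‖z - x‖},
      (‖(z : X) - x‖)⁻¹ • (z : X) ∈
        {m : X | m ∈ chordMidpoints x ∧ ‖m‖ < 1} := by
    intro z
    obtain ⟨h1, h2⟩ := z.2
    set t := ‖(z : X) - x‖ with ht
    have ht0 : 0 < t := htpos z
    constructor
    · refine ⟨t⁻¹ • ((z : X) - x), t⁻¹ • ((z : X) + x), ?_, ?_, ⟨2 * t⁻¹, ?_, ?_⟩, ?_⟩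
      · rw [norm_smul, Real.norm_of_nonneg (by positivity)]
        field_simp
        exact ht.symm
      · rw [norm_smul, Real.norm_of_nonneg (by positivity), ← h1]
        field_simp
      · positivity
      · module
      · module
    · rw [norm_smul, Real.norm_of_nonneg (by positivity)]
      calc t⁻¹ * ‖(z : X)‖ < t⁻¹ * t := by
            exact (mul_lt_mul_iff_right₀ (by positivity)).2 h2
        _ = 1 := inv_mul_cancel₀ (ne_of_gt ht0)
  -- inverse map lands in the source
  have hinv : ∀ m : {m : X | m ∈ chordMidpoints x ∧ ‖m‖ < 1},
      (sFun x m)⁻¹ • (m : X) ∈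
        {z : X | ‖z - x‖ = ‖z + x‖ ∧ ‖z‖ < ‖z - x‖} := by
    intro m
    set s := sFun x m with hs
    have hs0 : 0 < s := sFun_pos x m
    have hsub : (s⁻¹ • (m : X)) - x = s⁻¹ • ((m : X) - s • x) := by
      rw [smul_sub, smul_smul, inv_mul_cancel₀ (ne_of_gt hs0), one_smul]
    have hadd : (s⁻¹ • (m : X)) + x = s⁻¹ • ((m : X) + s • x) := by
      rw [smul_add, smul_smul, inv_mul_cancel₀ (ne_of_gt hs0), one_smul]
    have hns : ‖(s⁻¹ • (m : X)) - x‖ = s⁻¹ := by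
      rw [hsub, norm_smul, Real.norm_of_nonneg (by positivity), sFun_sub x m, mul_one]
    have hna : ‖(s⁻¹ • (m : X)) + x‖ = s⁻¹ := by
      rw [hadd, norm_smul, Real.norm_of_nonneg (by positivity), sFun_add x m, mul_one]
    refine ⟨by rw [hns, hna], ?_⟩
    rw [hns, norm_smul, Real.norm_of_nonneg (by positivity)]
    calc s⁻¹ * ‖(m : X)‖ < s⁻¹ * 1 := (mul_lt_mul_iff_right₀ (by positivity)).2 m.2.2
      _ = s⁻¹ := mul_one _
  refine ⟨Homeomorph.mk ⟨fun z => ⟨(‖(z : X) - x‖)⁻¹ • (z : X), hfwd z⟩,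
      fun m => ⟨(sFun x m)⁻¹ • (m : X), hinv m⟩, ?_, ?_⟩ ?_ ?_, fun z => rfl⟩
  · -- left inverse
    intro z
    obtain ⟨h1, h2⟩ := z.2
    set t := ‖(z : X) - x‖ with ht
    have ht0 : 0 < t := htpos z
    set m : {m : X | m ∈ chordMidpoints x ∧ ‖m‖ < 1} :=
      ⟨t⁻¹ • (z : X), hfwd z⟩ with hm
    have hseq : sFun x m = t⁻¹ := by
      apply sFun_eq x m (by positivity)
      have : (m : X) + t⁻¹ • x = t⁻¹ • ((z : X) + x) := by
        simp only [hm]; module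
      rw [this, norm_smul, Real.norm_of_nonneg (by positivity), ← h1]
      field_simp
    apply Subtype.ext
    show (sFun x m)⁻¹ • (m : X) = (z : X)
    rw [hseq]
    simp only [hm]
    rw [smul_smul, inv_inv, mul_inv_cancel₀ (ne_of_gt ht0), one_smul]
  · -- right inverse
    intro m
    set s := sFun x m with hs
    have hs0 : 0 < s := sFun_pos x m
    apply Subtype.ext
    show (‖(s⁻¹ • (m : X)) - x‖)⁻¹ • (s⁻¹ • (m : X)) = (m : X)
    have hsub : (s⁻¹ • (m : X)) - x = s⁻¹ • ((m : X) - s • x) := by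
      rw [smul_sub, smul_smul, inv_mul_cancel₀ (ne_of_gt hs0), one_smul]
    have hns : ‖(s⁻¹ • (m : X)) - x‖ = s⁻¹ := by
      rw [hsub, norm_smul, Real.norm_of_nonneg (by positivity), sFun_sub x m, mul_one]
    rw [hns, smul_smul, inv_inv, mul_inv_cancel₀ (ne_of_gt hs0), one_smul]
  · -- continuity of forward map
    apply Continuous.subtype_mk
    exact ((continuous_subtype_val.sub continuous_const).norm.inv₀
      fun z => ne_of_gt (htpos z)).smul continuous_subtype_val
  · -- continuity of inverse map
    apply Continuous.subtype_mk
    exact ((continuous_sFun x).inv₀ fun m => ne_of_gt (sFun_pos x m)).smul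
      continuous_subtype_val
end
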